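/- Let F ⪯ F* be an elementary extension of fields in the language of rings, let X ⊆ F be a set defined in F by a formula φ(x;q) with parameters q from F, and let X* be the set defined by the same formula in F*. Let E = (X) and E* = (X*) be the generated subfields. If a tuple a ∈ F^n is algebraically independent over E, then a is algebraically independent over E*. -/

import Mathlib

open FirstOrder Language FirstOrder.Ring

lemma lift_map'' {α β R : Type*} [CommRing R] (f : α → β) (v : β → R) (x : FreeCommRing α) :
    FreeCommRing.lift v (FreeCommRing.map f x) = FreeCommRing.lift (v ∘ f) x := by
  have : (FreeCommRing.lift v).comp (FreeCommRing.map f) = FreeCommRing.lift (v ∘ f) :=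
    FreeCommRing.hom_ext fun x => by simp
  exact RingHom.congr_fun this x

lemma lift_mem_closure' {α R : Type*} [CommRing R] (f : α → R) (x : FreeCommRing α) :
    FreeCommRing.lift f x ∈ Subring.closure (Set.range f) := by
  refine FreeCommRing.induction_on x ?_ ?_ ?_ ?_
  · rw [map_neg, map_one]; exact neg_mem (one_mem _)
  · intro a; rw [FreeCommRing.lift_of]
    exact Subring.subset_closure (Set.mem_range_self a)
  · intro u v h1 h2; rw [map_add]; exact add_mem h1 h2
  · intro u v h1 h2; rw [map_mul]; exact mul_mem h1 h2

lemma exists_rep_of_mem_subring_closure {R : Type*} [CommRing R] {s : Set R} {x : R}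
    (hx : x ∈ Subring.closure s) :
    ∃ p : FreeCommRing s, FreeCommRing.lift (Subtype.val : s → R) p = x := by
  have hle : Subring.closure s ≤ (FreeCommRing.lift (Subtype.val : s → R)).range :=
    Subring.closure_le.2 fun y hy => ⟨FreeCommRing.of ⟨y, hy⟩, by simp⟩
  exact hle hx

lemma lift_bigP {n k r : ℕ} {R : Type*} [CommRing R]
    (supp : Finset (Fin n →₀ ℕ)) (qr : (Fin n →₀ ℕ) → FreeCommRing (Fin r))
    (v : Fin n ⊕ Fin k → R) (w : Fin r → R) :
    FreeCommRing.lift (Sum.elim v w)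
      (∑ m ∈ supp, FreeCommRing.map Sum.inr (qr m) *
        ∏ i : Fin n, FreeCommRing.of (Sum.inl (Sum.inl i) : (Fin n ⊕ Fin k) ⊕ Fin r) ^ (m i)) =
    ∑ m ∈ supp, FreeCommRing.lift w (qr m) * ∏ i : Fin n, v (Sum.inl i) ^ (m i) := by
  rw [map_sum]
  refine Finset.sum_congr rfl fun m _ => ?_
  rw [map_mul, map_prod, lift_map'']
  simp [Function.comp_def]

/-- Let `g : F → F*` be an elementary embedding of fields (language of
rings), `X ⊆ F` defined by a formula `φ(x; q)` with parameters `q` from `F`, and `X*` the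
set defined by the same formula in `F*`. If a tuple `a` is algebraically independent over
the subfield generated by `X`, then `g ∘ a` is algebraically independent over the subfield
generated by `X*`. -/
theorem algebraicIndependent_over_generated_subfield_elementary
    (F F' : Type*) [Field F] [Field F'] [CompatibleRing F] [CompatibleRing F']
    (g : F →+* F')
    (helem : ∀ (m : ℕ) (ψ : Language.ring.Formula (Fin m)) (x : Fin m → F),
      ψ.Realize (g ∘ x) ↔ ψ.Realize x)
    (k : ℕ) (φ : Language.ring.Formula (Fin k ⊕ Fin 1)) (q : Fin k → F)
    (X : Set F) (hX : X = {x : F | φ.Realize (Sum.elim q fun _ => x)})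
    (X' : Set F') (hX' : X' = {x : F' | φ.Realize (Sum.elim (g ∘ q) fun _ => x)})
    {n : ℕ} (a : Fin n → F)
    (ha : AlgebraicIndependent (Subfield.closure X) a) :
    AlgebraicIndependent (Subfield.closure X') (g ∘ a) := by
  classical
  rw [algebraicIndependent_iff] at ha ⊢
  intro p hp
  by_contra hp0
  -- push p into F'
  have halg' : (algebraMap ↥(Subfield.closure X') F') = (Subfield.closure X').subtype := rfl
  set p' : MvPolynomial (Fin n) F' := MvPolynomial.map (Subfield.closure X').subtype p with hp'def
  have hp'0 : p' ≠ 0 := fun h =>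
    hp0 (MvPolynomial.map_injective _ Subtype.val_injective (by rw [← hp'def, h, map_zero]))
  have hcoef : ∀ m, p'.coeff m ∈ Subfield.closure X' := fun m => by
    rw [hp'def, MvPolynomial.coeff_map]; exact (p.coeff m).2
  have hev : MvPolynomial.eval (g ∘ a) p' = 0 := by
    rw [hp'def, MvPolynomial.eval_map, ← halg', ← MvPolynomial.aeval_def, hp]
  set supp : Finset (Fin n →₀ ℕ) := p'.support with hsupp
  obtain ⟨m0, hm0⟩ : supp.Nonempty := by
    rw [hsupp, Finset.nonempty_iff_ne_empty, Ne, MvPolynomial.support_eq_empty]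
    exact hp'0
  -- write coefficients as fractions of elements of the subring closure
  have hfrac : ∀ m, ∃ u ∈ Subring.closure X', ∃ v ∈ Subring.closure X', u / v = p'.coeff m :=
    fun m => Subfield.mem_closure_iff.1 (hcoef m)
  choose u hu v hv huv using hfrac
  have hvne : ∀ m ∈ supp, v m ≠ 0 := by
    intro m hm hv0
    apply MvPolynomial.mem_support_iff.1 hm
    rw [← huv m, hv0, div_zero]
  have hune : ∀ m ∈ supp, u m ≠ 0 := by
    intro m hm hu0
    apply MvPolynomial.mem_support_iff.1 hm
    rw [← huv m, hu0, zero_div]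
  -- clear denominators
  set d : (Fin n →₀ ℕ) → F' := fun m => u m * ∏ m' ∈ supp.erase m, v m' with hd
  have hdmem : ∀ m, d m ∈ Subring.closure X' := fun m =>
    mul_mem (hu m) (prod_mem fun m' _ => hv m')
  have hdm0 : d m0 ≠ 0 := by
    refine mul_ne_zero (hune m0 hm0) (Finset.prod_ne_zero_iff.2 fun m' hm' => ?_)
    exact hvne m' (Finset.mem_of_mem_erase hm')
  have hkey : ∑ m ∈ supp, d m * ∏ i : Fin n, (g ∘ a) i ^ m i = 0 := by
    have : ∀ m ∈ supp, d m = p'.coeff m * ∏ m' ∈ supp, v m' := by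
      intro m hm
      have hum : u m = p'.coeff m * v m := (div_eq_iff (hvne m hm)).1 (huv m)
      rw [hd]
      simp only
      rw [hum, mul_assoc, Finset.mul_prod_erase _ _ hm]
    calc ∑ m ∈ supp, d m * ∏ i : Fin n, (g ∘ a) i ^ m i
        = (∏ m' ∈ supp, v m') * ∑ m ∈ supp, p'.coeff m * ∏ i : Fin n, (g ∘ a) i ^ m i := by
          rw [Finset.mul_sum]
          refine Finset.sum_congr rfl fun m hm => ?_
          rw [this m hm]; ring
      _ = 0 := by rw [← MvPolynomial.eval_eq', ← hsupp] at *; rw [hev, mul_zero]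
  -- free-comm-ring representations of the d m
  have hrep : ∀ m, ∃ pf : FreeCommRing ↥X', FreeCommRing.lift Subtype.val pf = d m :=
    fun m => exists_rep_of_mem_subring_closure (hdmem m)
  choose pf hpf using hrep
  have hts : ∀ m, ∃ t : Finset ↥X', FreeCommRing.IsSupported (pf m) ↑t :=
    fun m => FreeCommRing.exists_finset_support (pf m)
  choose t ht using hts
  set T : Finset ↥X' := supp.biUnion t with hT
  have hsuppT : ∀ m ∈ supp, FreeCommRing.IsSupported (pf m) ↑T := by
    intro m hm
    exact FreeCommRing.isSupported_upwards (ht m)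
      (by exact_mod_cast Finset.subset_biUnion_of_mem t hm)
  set S : Set ↥X' := ↑T with hS
  haveI : Fintype ↥S := FinsetCoe.fintype T
  set r : ℕ := Fintype.card ↥S with hr
  set e : ↥S ≃ Fin r := Fintype.equivFin ↥S with he
  set y : Fin r → F' := fun i => ((e.symm i : ↥X') : F') with hy
  have hyX' : ∀ i, y i ∈ X' := fun i => (e.symm i : ↥X').2
  set qr : (Fin n →₀ ℕ) → FreeCommRing (Fin r) :=
    fun m => FreeCommRing.map e (FreeCommRing.restriction S (pf m)) with hqr
  have hlift : ∀ m ∈ supp, FreeCommRing.lift y (qr m) = d m := by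
    intro m hm
    rw [hqr]
    simp only
    rw [lift_map'']
    have hye : y ∘ e = fun x : ↥S => ((x : ↥X') : F') := by
      funext x; simp [hy]
    rw [hye]
    have : (fun x : ↥S => ((x : ↥X') : F')) = Subtype.val ∘ (Subtype.val : ↥S → ↥X') := rfl
    rw [this, ← lift_map'', FreeCommRing.map_subtype_val_restriction _ (hsuppT m hm), hpf]
  -- the first-order formula
  set P : FreeCommRing ((Fin n ⊕ Fin k) ⊕ Fin r) :=
    ∑ m ∈ supp, FreeCommRing.map Sum.inr (qr m) *
      ∏ i : Fin n, FreeCommRing.of (Sum.inl (Sum.inl i) : (Fin n ⊕ Fin k) ⊕ Fin r) ^ (m i)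
    with hP
  set N : FreeCommRing ((Fin n ⊕ Fin k) ⊕ Fin r) := FreeCommRing.map Sum.inr (qr m0) with hN
  set φi : Fin r → Language.ring.Formula ((Fin n ⊕ Fin k) ⊕ Fin r) :=
    fun i => φ.relabel (Sum.elim (fun j => Sum.inl (Sum.inr j)) (fun _ => Sum.inr i)) with hφi
  set ψ0 : Language.ring.Formula ((Fin n ⊕ Fin k) ⊕ Fin r) :=
    (BoundedFormula.iInf φi) ⊓
      (((termOfFreeCommRing P).equal (termOfFreeCommRing 0)) ⊓
        ((termOfFreeCommRing N).equal (termOfFreeCommRing 0)).not) with hψ0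
  set ψ1 : Language.ring.Formula (Fin n ⊕ Fin k) :=
    ψ0.iExs (Fin r) with hψ1
  set ψ2 : Language.ring.Formula (Fin (n + k)) := ψ1.relabel finSumFinEquiv with hψ2
  set x0 : Fin (n + k) → F := Sum.elim a q ∘ finSumFinEquiv.symm with hx0
  -- realize in F'
  have hrealize' : ψ2.Realize (g ∘ x0) := by
    rw [hψ2, Formula.realize_relabel]
    have hco : (g ∘ x0) ∘ finSumFinEquiv = Sum.elim (g ∘ a) (g ∘ q) := by
      funext z; cases z <;> simp [hx0]
    rw [hco, hψ1, Formula.realize_iExs]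
    refine ⟨y, ?_⟩
    have hv : (fun z => Sum.elim (Sum.elim (g ∘ a) (g ∘ q)) y (id z)) =
        Sum.elim (Sum.elim (g ∘ a) (g ∘ q)) y := by funext z; simp
    rw [hψ0]
    refine BoundedFormula.realize_inf.2 ⟨?_, BoundedFormula.realize_inf.2 ⟨?_, ?_⟩⟩
    · refine (BoundedFormula.realize_iInf (f := φi)).2 ?_
      intro i
      rw [hφi]
      simp only
      rw [show (BoundedFormula.Realize
          (φ.relabel (Sum.elim (fun j => Sum.inl (Sum.inr j)) fun _ => Sum.inr i))
          (Sum.elim (Sum.elim (g ∘ a) (g ∘ q)) y) default) =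
          (Formula.Realize (φ.relabel (Sum.elim (fun j => Sum.inl (Sum.inr j)) fun _ => Sum.inr i))
          (Sum.elim (Sum.elim (g ∘ a) (g ∘ q)) y)) from rfl]
      rw [Formula.realize_relabel]
      have : (Sum.elim (Sum.elim (g ∘ a) (g ∘ q)) y ∘
          Sum.elim (fun j => Sum.inl (Sum.inr j)) fun _ => Sum.inr i) =
          Sum.elim (g ∘ q) (fun _ : Fin 1 => y i) := by
        funext z; cases z <;> simp
      rw [this]
      have := hyX' i
      rw [hX'] at this
      exact this
    · rw [show (BoundedFormula.Realize ((termOfFreeCommRing P).equal (termOfFreeCommRing 0))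
          (Sum.elim (Sum.elim (g ∘ a) (g ∘ q)) y) default) =
          (Formula.Realize ((termOfFreeCommRing P).equal (termOfFreeCommRing 0))
          (Sum.elim (Sum.elim (g ∘ a) (g ∘ q)) y)) from rfl]
      rw [Formula.realize_equal, realize_termOfFreeCommRing, realize_termOfFreeCommRing]
      rw [hP, lift_bigP supp qr (Sum.elim (g ∘ a) (g ∘ q)) y, map_zero]
      rw [← hkey]
      refine Finset.sum_congr rfl fun m hm => ?_
      rw [hlift m hm]
      simp
    · rw [BoundedFormula.realize_not]
      rw [show (BoundedFormula.Realize ((termOfFreeCommRing N).equal (termOfFreeCommRing 0))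
          (Sum.elim (Sum.elim (g ∘ a) (g ∘ q)) y) default) =
          (Formula.Realize ((termOfFreeCommRing N).equal (termOfFreeCommRing 0))
          (Sum.elim (Sum.elim (g ∘ a) (g ∘ q)) y)) from rfl]
      rw [Formula.realize_equal, realize_termOfFreeCommRing, realize_termOfFreeCommRing,
        map_zero, hN, lift_map'']
      have : (Sum.elim (Sum.elim (g ∘ a) (g ∘ q)) y ∘ Sum.inr) = y := by funext z; simp
      rw [this, hlift m0 hm0]
      exact hdm0
  -- transfer to F
  have hrealize : ψ2.Realize x0 := (helem (n + k) ψ2 x0).1 hrealize'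
  rw [hψ2, Formula.realize_relabel] at hrealize
  have hco : x0 ∘ finSumFinEquiv = Sum.elim a q := by
    funext z; cases z <;> simp [hx0]
  rw [hco, hψ1, Formula.realize_iExs] at hrealize
  obtain ⟨x', hx'⟩ := hrealize
  have hv : (fun z => Sum.elim (Sum.elim a q) x' (id z)) = Sum.elim (Sum.elim a q) x' := by
    funext z; simp
  rw [hψ0] at hx'
  obtain ⟨hx'1, hx'23⟩ := BoundedFormula.realize_inf.1 hx'
  obtain ⟨hx'2, hx'3⟩ := BoundedFormula.realize_inf.1 hx'23
  -- decode the three conditions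
  have hx'X : ∀ i, x' i ∈ X := by
    intro i
    have := (BoundedFormula.realize_iInf (f := φi)).1 hx'1 i
    rw [hφi] at this
    simp only at this
    rw [show (BoundedFormula.Realize
        (φ.relabel (Sum.elim (fun j => Sum.inl (Sum.inr j)) fun _ => Sum.inr i))
        (Sum.elim (Sum.elim a q) x') default) =
        (Formula.Realize (φ.relabel (Sum.elim (fun j => Sum.inl (Sum.inr j)) fun _ => Sum.inr i))
        (Sum.elim (Sum.elim a q) x')) from rfl] at this
    rw [Formula.realize_relabel] at this
    have hc : (Sum.elim (Sum.elim a q) x' ∘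
        Sum.elim (fun j => Sum.inl (Sum.inr j)) fun _ => Sum.inr i) =
        Sum.elim q (fun _ : Fin 1 => x' i) := by
      funext z; cases z <;> simp
    rw [hc] at this
    rw [hX]
    exact this
  set c : (Fin n →₀ ℕ) → F := fun m => FreeCommRing.lift x' (qr m) with hc
  have hcsum : ∑ m ∈ supp, c m * ∏ i : Fin n, a i ^ m i = 0 := by
    rw [show (BoundedFormula.Realize ((termOfFreeCommRing P).equal (termOfFreeCommRing 0))
        (Sum.elim (Sum.elim a q) x') default) =
        (Formula.Realize ((termOfFreeCommRing P).equal (termOfFreeCommRing 0))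
        (Sum.elim (Sum.elim a q) x')) from rfl] at hx'2
    rw [Formula.realize_equal, realize_termOfFreeCommRing, realize_termOfFreeCommRing,
      map_zero, hP, lift_bigP supp qr (Sum.elim a q) x'] at hx'2
    rw [← hx'2]
    rfl
  have hcm0 : c m0 ≠ 0 := by
    rw [BoundedFormula.realize_not] at hx'3
    rw [show (BoundedFormula.Realize ((termOfFreeCommRing N).equal (termOfFreeCommRing 0))
        (Sum.elim (Sum.elim a q) x') default) =
        (Formula.Realize ((termOfFreeCommRing N).equal (termOfFreeCommRing 0))
        (Sum.elim (Sum.elim a q) x')) from rfl] at hx'3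
    rw [Formula.realize_equal, realize_termOfFreeCommRing, realize_termOfFreeCommRing,
      map_zero, hN, lift_map''] at hx'3
    have : (Sum.elim (Sum.elim a q) x' ∘ Sum.inr) = x' := by funext z; simp
    rw [this] at hx'3
    exact hx'3
  have hcmem : ∀ m, c m ∈ Subfield.closure X := by
    intro m
    have h1 : c m ∈ Subring.closure (Set.range x') := lift_mem_closure' x' (qr m)
    have h2 : Subring.closure (Set.range x') ≤ (Subfield.closure X).toSubring := by
      refine Subring.closure_le.2 fun z hz => ?_
      obtain ⟨i, rfl⟩ := hz
      exact Subfield.subset_closure (hx'X i)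
    exact h2 h1
  -- build the contradiction polynomial over Subfield.closure X
  set r0 : MvPolynomial (Fin n) ↥(Subfield.closure X) :=
    ∑ m ∈ supp, MvPolynomial.monomial m ⟨c m, hcmem m⟩ with hr0
  have haev : MvPolynomial.aeval a r0 = 0 := by
    rw [hr0, map_sum]
    rw [← hcsum]
    refine Finset.sum_congr rfl fun m _ => ?_
    rw [MvPolynomial.aeval_monomial]
    congr 1
    exact Finsupp.prod_pow m a
  have := ha r0 haev
  have hco : r0.coeff m0 = ⟨c m0, hcmem m0⟩ := by
    rw [hr0, MvPolynomial.coeff_sum]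
    rw [Finset.sum_eq_single m0]
    · rw [MvPolynomial.coeff_monomial, if_pos rfl]
    · intro m _ hne
      rw [MvPolynomial.coeff_monomial, if_neg hne]
    · intro h; exact absurd hm0 h
  rw [this] at hco
  simp only [MvPolynomial.coeff_zero] at hco
  exact hcm0 (by simpa using congrArg Subtype.val hco.symm)
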